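/- arXiv:2507.14068 — 4 statements merged into one kernel-verified Lean document; each statement's English description precedes it below -/
import Mathlib

section
/- Let L be a finite G-lattice and let x, y ∈ L with x < y. Then the transfer system ⌊x → y⌋ is a join-irreducible element of the lattice Tr(L) of transfer systems on L. -/
/-- A transfer system on a `G`-lattice `L`: a partial order refining `≤`,
closed under the `G`-action and under restriction. -/
structure TransferSystem (G L : Type*) [Group G] [Lattice L] [MulAction G L] : Type _ where
  rel : L → L → Prop
  refl : ∀ x, rel x x
  trans : ∀ {x y z}, rel x y → rel y z → rel x z
  le_of_rel : ∀ {x y}, rel x y → x ≤ y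
  smul_rel : ∀ (g : G) {x y}, rel x y → rel (g • x) (g • y)
  restrict : ∀ {x y x'}, rel x y → x' ≤ y → rel (x ⊓ x') x'

namespace TransferSystem

variable {G L : Type*} [Group G] [Lattice L] [MulAction G L]
  [CovariantClass G L (· • ·) (· ≤ ·)]

theorem ext' {S T : TransferSystem G L} (h : S.rel = T.rel) : S = T := by
  cases S; cases T; simpa using h

instance : PartialOrder (TransferSystem G L) where
  le S T := ∀ ⦃x y : L⦄, S.rel x y → T.rel x y
  le_refl S := fun _ _ h => h
  le_trans S T U h1 h2 := fun _ _ h => h2 (h1 h)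
  le_antisymm S T h1 h2 :=
    ext' (by funext x y; exact propext ⟨fun h => h1 h, fun h => h2 h⟩)

lemma smul_mono' (g : G) {x y : L} (h : x ≤ y) : g • x ≤ g • y :=
  CovariantClass.elim g h

/-- The intersection of a set of transfer systems. -/
def sInfTS (s : Set (TransferSystem G L)) : TransferSystem G L where
  rel x y := x ≤ y ∧ ∀ T ∈ s, T.rel x y
  refl x := ⟨le_refl x, fun T _ => T.refl x⟩
  trans h1 h2 := ⟨h1.1.trans h2.1, fun T hT => T.trans (h1.2 T hT) (h2.2 T hT)⟩
  le_of_rel h := h.1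
  smul_rel g _ _ h := ⟨smul_mono' g h.1, fun T hT => T.smul_rel g (h.2 T hT)⟩
  restrict h hle := ⟨inf_le_right, fun T hT => T.restrict (h.2 T hT) hle⟩

instance : InfSet (TransferSystem G L) := ⟨sInfTS⟩

theorem sInf_rel (s : Set (TransferSystem G L)) (x y : L) :
    (sInf s).rel x y ↔ x ≤ y ∧ ∀ T ∈ s, T.rel x y := Iff.rfl

/-- The lattice of transfer systems, ordered by refinement. -/
instance : CompleteLattice (TransferSystem G L) :=
  completeLatticeOfInf _ (fun s =>
    ⟨fun T hT _ _ h => h.2 T hT,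
     fun T hT _ _ h => ((sInf_rel s _ _).2 ⟨T.le_of_rel h, fun S hS => hT hS h⟩)⟩)

/-- `⌊x → y⌋`, the smallest transfer system containing the pair `(x, y)`. -/
def gen (x y : L) : TransferSystem G L := sInf {T : TransferSystem G L | T.rel x y}

end TransferSystem


section Aux

open TransferSystem

variable {G L : Type*} [Group G] [Lattice L] [MulAction G L]
  [CovariantClass G L (· • ·) (· ≤ ·)]

lemma smul_inf' (g : G) (u v : L) : g • (u ⊓ v) = g • u ⊓ g • v := by
  apply le_antisymm
  · exact le_inf (TransferSystem.smul_mono' g inf_le_left)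
      (TransferSystem.smul_mono' g inf_le_right)
  · have h : g⁻¹ • (g • u ⊓ g • v) ≤ u ⊓ v := le_inf
      (by simpa using TransferSystem.smul_mono' g⁻¹ (inf_le_left (a := g • u) (b := g • v)))
      (by simpa using TransferSystem.smul_mono' g⁻¹ (inf_le_right (a := g • u) (b := g • v)))
    have h2 := TransferSystem.smul_mono' g h
    simpa using h2

lemma smul_fix [Finite G] (g : G) {x : L} (h : x ≤ g • x) : g • x = x := by
  have key : ∀ (y : L), y ≤ g • y → ∀ k : ℕ, y ≤ g ^ k • y := by
    intro y hy k
    induction k with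
    | zero => simp
    | succ k ih =>
      calc y ≤ g • y := hy
        _ ≤ g • (g ^ k • y) := TransferSystem.smul_mono' g ih
        _ = g ^ (k + 1) • y := by rw [pow_succ', mul_smul]
  have hn : 0 < Nat.card G := Nat.card_pos
  have h1 : g • x ≤ g • (g • x) := TransferSystem.smul_mono' g h
  have h2 := key (g • x) h1 (Nat.card G - 1)
  have h3 : g ^ (Nat.card G - 1) • (g • x) = x := by
    rw [← mul_smul, ← pow_succ, Nat.sub_add_cancel hn, pow_card_eq_one']
    simp
  have h4 : g • x ≤ x := by
    calc g • x ≤ g ^ (Nat.card G - 1) • (g • x) := h2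
      _ = x := h3
  exact le_antisymm h4 h

/-- iterated inf of translates of `x` over base `b`. -/
def foldInf (x b : L) : List G → L
  | [] => b
  | g :: l => g • x ⊓ foldInf x b l

lemma foldInf_le (x b : L) (l : List G) : foldInf x b l ≤ b := by
  induction l with
  | nil => exact le_rfl
  | cons g l ih => exact inf_le_right.trans ih

lemma foldInf_append (x b : L) (l₁ l₂ : List G) :
    foldInf x b (l₁ ++ l₂) = foldInf x (foldInf x b l₂) l₁ := by
  induction l₁ with
  | nil => rfl
  | cons g l ih => simp [foldInf, ih]

lemma smul_foldInf (g : G) (x b : L) (l : List G) :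
    g • foldInf x b l = foldInf x (g • b) (l.map (fun h => g * h)) := by
  induction l with
  | nil => rfl
  | cons h l ih =>
    simp only [foldInf, List.map_cons, smul_inf', ih, mul_smul]

lemma foldInf_inf (x : L) {b a' : L} (ha' : a' ≤ b) (l : List G) :
    foldInf x b l ⊓ a' = foldInf x a' l := by
  induction l with
  | nil => exact inf_eq_right.mpr ha'
  | cons g l ih => rw [foldInf, foldInf, inf_assoc, ih]

/-- An explicit transfer system containing `(x, y)` when `x ≤ y`. -/
def genSuper (x : L) : TransferSystem G L where
  rel a b := a ≤ b ∧ ∃ l : List G, a = foldInf x b l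
  refl a := ⟨le_rfl, [], rfl⟩
  trans := by
    rintro a b c ⟨h1, l₁, e₁⟩ ⟨h2, l₂, e₂⟩
    exact ⟨h1.trans h2, l₁ ++ l₂, by rw [foldInf_append, ← e₂, e₁]⟩
  le_of_rel h := h.1
  smul_rel := by
    rintro g a b ⟨h, l, e⟩
    exact ⟨TransferSystem.smul_mono' g h, l.map (fun h => g * h), by rw [e, smul_foldInf]⟩
  restrict := by
    rintro a b a' ⟨h, l, e⟩ ha'
    exact ⟨inf_le_right, l, by rw [e, foldInf_inf x ha']⟩

/-- The diagonal transfer system. -/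
def diagTS : TransferSystem G L where
  rel a b := a = b
  refl _ := rfl
  trans h1 h2 := h1.trans h2
  le_of_rel h := h.le
  smul_rel := by intro g a b h; rw [h]
  restrict := by intro a b a' h ha'; subst h; exact inf_eq_right.mpr ha'

/-- The join of two transfer systems, described as reflexive transitive closure. -/
def joinTS (R S : TransferSystem G L) : TransferSystem G L where
  rel := Relation.ReflTransGen (fun u v => R.rel u v ∨ S.rel u v)
  refl _ := Relation.ReflTransGen.refl
  trans h1 h2 := h1.trans h2
  le_of_rel := by
    intro a b h
    induction h with
    | refl => exact le_rfl
    | tail _ step ih => exact ih.trans (step.elim R.le_of_rel S.le_of_rel)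
  smul_rel := by
    intro g a b h
    induction h with
    | refl => exact Relation.ReflTransGen.refl
    | tail _ step ih => exact ih.tail (step.imp (R.smul_rel g) (S.smul_rel g))
  restrict := by
    intro a b a' h ha'
    induction h using Relation.ReflTransGen.head_induction_on with
    | refl =>
      have e : b ⊓ a' = a' := inf_eq_right.mpr ha'
      rw [e]
    | @head c u step _ ih =>
      have hcu : c ≤ u := step.elim R.le_of_rel S.le_of_rel
      have hstep : R.rel (c ⊓ a') (u ⊓ a') ∨ S.rel (c ⊓ a') (u ⊓ a') := by
        have e : c ⊓ (u ⊓ a') = c ⊓ a' := by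
          rw [← inf_assoc, inf_eq_left.mpr hcu]
        cases step with
        | inl hR => exact Or.inl (e ▸ R.restrict hR inf_le_left)
        | inr hS => exact Or.inr (e ▸ S.restrict hS inf_le_left)
      exact Relation.ReflTransGen.head hstep ih

lemma le_joinTS_left (R S : TransferSystem G L) : R ≤ joinTS R S :=
  fun _ _ h => Relation.ReflTransGen.single (Or.inl h)

lemma le_joinTS_right (R S : TransferSystem G L) : S ≤ joinTS R S :=
  fun _ _ h => Relation.ReflTransGen.single (Or.inr h)

lemma gen_rel_self (x y : L) (hxy : x ≤ y) : (gen (G := G) x y).rel x y :=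
  ⟨hxy, fun T hT => hT⟩

lemma gen_le_of_rel {x y : L} {T : TransferSystem G L} (h : T.rel x y) :
    gen (G := G) x y ≤ T := fun _ _ hab => hab.2 T h

lemma genSuper_rel_gen (x y : L) (hxy : x ≤ y) :
    (genSuper (G := G) x).rel x y :=
  ⟨hxy, [1], by simp [foldInf, inf_eq_left.mpr hxy]⟩

/-- Key structural lemma: a pair in `gen x y` with target `y` and source above `x`
is either `(x,y)` or trivial. -/
lemma gen_target_eq [Finite G] {x y a : L} (hxy : x ≤ y)
    (h : (gen (G := G) x y).rel a y) (hxa : x ≤ a) : a = x ∨ a = y := by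
  have h' : (genSuper (G := G) x).rel a y :=
    gen_le_of_rel (genSuper_rel_gen x y hxy) h
  obtain ⟨hay, l, e⟩ := h'
  cases l with
  | nil => exact Or.inr e
  | cons g l' =>
    left
    have hagx : a ≤ g • x := e ▸ inf_le_left
    have hfix : g • x = x := smul_fix g (hxa.trans hagx)
    exact le_antisymm (hagx.trans_eq hfix) hxa

end Aux



/-- For `x < y` in a finite `G`-lattice, `⌊x → y⌋` is a join-irreducible
element of `Tr(L)`. -/
theorem supIrred_gen {G L : Type*} [Group G] [Finite G] [Lattice L] [Finite L]
    [MulAction G L] [CovariantClass G L (· • ·) (· ≤ ·)]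
    (x y : L) (hxy : x < y) :
    SupIrred (TransferSystem.gen (G := G) x y) := by
  constructor
  · intro hmin
    have hle : TransferSystem.gen (G := G) x y ≤ diagTS :=
      (hmin (inf_le_left (a := TransferSystem.gen (G := G) x y) (b := diagTS))).trans
        inf_le_right
    exact hxy.ne (hle (gen_rel_self x y hxy.le))
  · intro b c hbc
    by_cases hb : b.rel x y
    · left
      exact le_antisymm (hbc ▸ le_sup_left) (gen_le_of_rel hb)
    by_cases hc : c.rel x y
    · right
      exact le_antisymm (hbc ▸ le_sup_right) (gen_le_of_rel hc)
    exfalso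
    have hbgen : b ≤ TransferSystem.gen (G := G) x y := hbc ▸ le_sup_left
    have hcgen : c ≤ TransferSystem.gen (G := G) x y := hbc ▸ le_sup_right
    have hjoin : b ⊔ c ≤ joinTS b c := sup_le (le_joinTS_left b c) (le_joinTS_right b c)
    have hchain : (joinTS b c).rel x y := hjoin (hbc ▸ gen_rel_self x y hxy.le)
    -- induct along the chain
    have key : ∀ a : L, Relation.ReflTransGen (fun u v => b.rel u v ∨ c.rel u v) a y →
        x ≤ a → a = y := by
      intro a h
      induction h using Relation.ReflTransGen.head_induction_on with
      | refl => intro _; rfl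
      | @head p u step _ ih =>
        intro hxp
        have hpu : p ≤ u := step.elim b.le_of_rel c.le_of_rel
        have huy : u = y := ih (hxp.trans hpu)
        rw [huy] at step
        have hgen : (TransferSystem.gen (G := G) x y).rel p y :=
          step.elim (fun h => hbgen h) (fun h => hcgen h)
        rcases gen_target_eq hxy.le hgen hxp with hpx | hpy
        · subst hpx
          exact (step.elim hb hc).elim
        · exact hpy
    have := key x hchain le_rfl
    exact hxy.ne this
end

section
/- Let L be a finite G-lattice. Then the set of meet-irreducible elements of Tr(L) is exactly {⌈x → y⌉^⊠ : x, y ∈ L, x < y}, and the map ⌊x → y⌋ ↦ ⌈x → y⌉^⊠ is a well-defined bijection from the set of join-irreducible elements of Tr(L) to the set of meet-irreducible elements of Tr(L). In particular, the number of meet-irreducible elements of Tr(L) equals the number of G-orbits of pairs (x, y) ∈ L × L with x < y under the diagonal action g·(x, y) = (g·x, g·y). -/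
/-- A cotransfer system on a `G`-lattice `L`: a partial order refining `≤`,
closed under the `G`-action and under corestriction. -/
structure CoTransferSystem (G L : Type*) [Group G] [Lattice L] [MulAction G L] : Type _ where
  rel : L → L → Prop
  refl : ∀ x, rel x x
  trans : ∀ {x y z}, rel x y → rel y z → rel x z
  le_of_rel : ∀ {x y}, rel x y → x ≤ y
  smul_rel : ∀ (g : G) {x y}, rel x y → rel (g • x) (g • y)
  corestrict : ∀ {x y y'}, rel x y → x ≤ y' → rel y' (y ⊔ y')

namespace CoTransferSystem

variable {G L : Type*} [Group G] [Lattice L] [MulAction G L]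
  [CovariantClass G L (· • ·) (· ≤ ·)]

theorem ext' {S T : CoTransferSystem G L} (h : S.rel = T.rel) : S = T := by
  cases S; cases T; simpa using h

/-- Cotransfer systems are ordered by refinement. -/
instance : PartialOrder (CoTransferSystem G L) where
  le S T := ∀ ⦃x y : L⦄, S.rel x y → T.rel x y
  le_refl S := fun _ _ h => h
  le_trans S T U h1 h2 := fun _ _ h => h2 (h1 h)
  le_antisymm S T h1 h2 :=
    ext' (by funext x y; exact propext ⟨fun h => h1 h, fun h => h2 h⟩)

/-- `⌈x → y⌉`, the smallest cotransfer system containing the pair `(x, y)`. -/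
def gen (x y : L) : CoTransferSystem G L where
  rel a b := a ≤ b ∧ ∀ C : CoTransferSystem G L, C.rel x y → C.rel a b
  refl a := ⟨le_refl a, fun C _ => C.refl a⟩
  trans h1 h2 := ⟨h1.1.trans h2.1, fun C hC => C.trans (h1.2 C hC) (h2.2 C hC)⟩
  le_of_rel h := h.1
  smul_rel g _ _ h :=
    ⟨TransferSystem.smul_mono' g h.1, fun C hC => C.smul_rel g (h.2 C hC)⟩
  corestrict h hle := ⟨le_sup_right, fun C hC => C.corestrict (h.2 C hC) hle⟩

end CoTransferSystem

/-- `C^⊠`: the pairs `(a, b)` with `a ≤ b` having the right lifting property with respect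
to every pair of `C`. -/
def rlpRel {G L : Type*} [Group G] [Lattice L] [MulAction G L]
    (C : CoTransferSystem G L) : L → L → Prop :=
  fun a b => a ≤ b ∧ ∀ ⦃x y : L⦄, C.rel x y → x ≤ a → y ≤ b → y ≤ a

/-- The orbit equivalence relation for the diagonal `G`-action on the set of
nontrivial relations `{(x, y) : x < y}` in `L`. -/
def pairOrbitSetoid (G L : Type*) [Group G] [Lattice L] [MulAction G L] :
    Setoid {p : L × L // p.1 < p.2} where
  r p q := ∃ g : G, g • p.1 = q.1
  iseqv := by
    refine ⟨fun p => ⟨1, one_smul _ _⟩, ?_, ?_⟩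
    · rintro p q ⟨g, hg⟩
      exact ⟨g⁻¹, by rw [← hg, inv_smul_smul]⟩
    · rintro p q r ⟨g, hg⟩ ⟨g', hg'⟩
      exact ⟨g' * g, by rw [mul_smul, hg, hg']⟩


namespace TSAux

open TransferSystem

variable {G L : Type*} [Group G] [Lattice L] [MulAction G L]
  [CovariantClass G L (· • ·) (· ≤ ·)]

/-- The action of `g` as an order isomorphism. -/
def smulIso (g : G) : L ≃o L where
  toFun := fun a => g • a
  invFun := fun a => g⁻¹ • a
  left_inv := fun a => inv_smul_smul g a
  right_inv := fun a => smul_inv_smul g a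
  map_rel_iff' := @fun a b =>
    ⟨fun h => by simpa using smul_mono' (L := L) g⁻¹ h, fun h => smul_mono' g h⟩

lemma smul_inf' (g : G) (a b : L) : g • (a ⊓ b) = g • a ⊓ g • b :=
  (smulIso (L := L) g).map_inf a b

lemma smul_sup' (g : G) (a b : L) : g • (a ⊔ b) = g • a ⊔ g • b :=
  (smulIso (L := L) g).map_sup a b

lemma le_of_smul_le (g : G) {a b : L} (h : g • a ≤ g • b) : a ≤ b := by
  simpa using smul_mono' (L := L) g⁻¹ h

lemma smul_fix [Finite G] (g : G) {a : L} (h : g • a ≤ a) : g • a = a := by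
  have hpow : ∀ k : ℕ, g ^ k • a ≤ a := by
    intro k
    induction k with
    | zero => simp
    | succ n ih =>
      have e : g ^ (n + 1) • a = g ^ n • g • a := by rw [pow_succ, mul_smul]
      rw [e]
      exact le_trans (smul_mono' _ h) ih
  refine le_antisymm h ?_
  obtain ⟨m, hm⟩ : ∃ m, orderOf g = m + 1 :=
    ⟨orderOf g - 1, (Nat.succ_pred_eq_of_pos (orderOf_pos g)).symm⟩
  calc a = g ^ orderOf g • a := by rw [pow_orderOf_eq_one, one_smul]
    _ = g • g ^ m • a := by rw [hm, pow_succ', mul_smul]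
    _ ≤ g • a := smul_mono' g (hpow m)

instance [Finite L] : Finite (TransferSystem G L) := by
  classical
  exact Finite.of_injective (fun T : TransferSystem G L => T.rel)
    (fun S T h => TransferSystem.ext' h)

/-- The closed form of `⌈x → y⌉^⊠` as a transfer system. -/
def Rsys (x y : L) : TransferSystem G L where
  rel a b := a ≤ b ∧ ∀ g : G, g • x ≤ a → g • y ≤ b → g • y ≤ a
  refl a := ⟨le_rfl, fun _ _ h2 => h2⟩
  trans := by
    rintro a b c ⟨hab, H1⟩ ⟨hbc, H2⟩
    exact ⟨hab.trans hbc, fun g h1 h2 => H1 g h1 (H2 g (h1.trans hab) h2)⟩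
  le_of_rel h := h.1
  smul_rel := by
    rintro h a b ⟨hab, H⟩
    refine ⟨smul_mono' h hab, fun g h1 h2 => ?_⟩
    have e1 : (h⁻¹ * g) • x ≤ a := by
      have := smul_mono' (L := L) h⁻¹ h1
      rwa [inv_smul_smul, ← mul_smul] at this
    have e2 : (h⁻¹ * g) • y ≤ b := by
      have := smul_mono' (L := L) h⁻¹ h2
      rwa [inv_smul_smul, ← mul_smul] at this
    have := smul_mono' (L := L) h (H (h⁻¹ * g) e1 e2)
    rwa [← mul_smul, mul_inv_cancel_left] at this
  restrict := by
    rintro a b a' ⟨hab, H⟩ ha'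
    exact ⟨inf_le_right, fun g h1 h2 =>
      le_inf (H g (h1.trans inf_le_left) (h2.trans ha')) h2⟩

lemma Rsys_rel_iff {x y a b : L} :
    (Rsys (G := G) x y).rel a b ↔ a ≤ b ∧ ∀ g : G, g • x ≤ a → g • y ≤ b → g • y ≤ a :=
  Iff.rfl

lemma not_Rsys_self {x y : L} (hxy : x < y) : ¬ (Rsys (G := G) x y).rel x y := by
  rintro ⟨-, H⟩
  exact hxy.not_ge (by simpa using H 1 (by simp) (by simp))

/-- The full transfer system. -/
def Ttop : TransferSystem G L where
  rel a b := a ≤ b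
  refl a := le_rfl
  trans h1 h2 := h1.trans h2
  le_of_rel h := h
  smul_rel g _ _ h := smul_mono' g h
  restrict _ h := inf_le_right

lemma gen_rel_self {x y : L} (hxy : x ≤ y) : (TransferSystem.gen (G := G) x y).rel x y :=
  (sInf_rel _ _ _).mpr ⟨hxy, fun _ hT => hT⟩

lemma gen_le {x y : L} (hxy : x ≤ y) {T : TransferSystem G L} :
    TransferSystem.gen (G := G) x y ≤ T ↔ T.rel x y :=
  ⟨fun h => h (gen_rel_self hxy), fun h => sInf_le h⟩

lemma inf_rel {S S' : TransferSystem G L} {u v : L} :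
    (S ⊓ S').rel u v ↔ u ≤ v ∧ S.rel u v ∧ S'.rel u v := by
  constructor
  · intro h
    exact ⟨(S ⊓ S').le_of_rel h, inf_le_left (a := S) (b := S') h,
      inf_le_right (a := S) (b := S') h⟩
  · rintro ⟨huv, h1, h2⟩
    have hT0 : sInf {S, S'} = S ⊓ S' := by
      apply le_antisymm
      · exact le_inf (sInf_le (by simp)) (sInf_le (by simp))
      · apply le_sInf
        rintro T hT
        rcases hT with rfl | rfl
        · exact inf_le_left
        · exact inf_le_right
    rw [← hT0]
    exact (sInf_rel _ _ _).mpr ⟨huv, by rintro T (rfl | rfl) <;> assumption⟩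

/-- Restriction-translation step: a relation catching a translated pair `(x,y)`
yields a relation of the form `(c, y)` with `x ≤ c < y`. -/
lemma step {T : TransferSystem G L} {u v x y : L} (g : G) (hxy : x ≤ y)
    (hT : T.rel u v) (h1 : g • x ≤ u) (h2 : g • y ≤ v) (h3 : ¬ g • y ≤ u) :
    ∃ c, x ≤ c ∧ c < y ∧ T.rel c y := by
  have hr := T.restrict hT h2
  have hs := T.smul_rel g⁻¹ hr
  have e1 : g⁻¹ • (u ⊓ g • y) = g⁻¹ • u ⊓ y := by rw [smul_inf', inv_smul_smul]
  have e2 : g⁻¹ • (g • y) = y := inv_smul_smul g y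
  rw [e1, e2] at hs
  have hxg : x ≤ g⁻¹ • u := by
    have := smul_mono' (L := L) g⁻¹ h1
    rwa [inv_smul_smul] at this
  refine ⟨g⁻¹ • u ⊓ y, le_inf hxg hxy, lt_of_le_of_ne inf_le_right ?_, hs⟩
  intro he
  apply h3
  have : y ≤ g⁻¹ • u := by rw [← he]; exact inf_le_left
  have := smul_mono' (L := L) g this
  rwa [smul_inv_smul] at this

section FiniteBoth

variable [Finite G]

lemma Rsys_rel_left {x c y : L} (hxc : x ≤ c) (hcy : c < y) :
    (Rsys (G := G) x y).rel x c := by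
  refine ⟨hxc, fun g _ h2 => ?_⟩
  have hfix : g • y = y := smul_fix g (h2.trans hcy.le)
  rw [hfix] at h2
  exact absurd (lt_of_le_of_lt h2 hcy) (lt_irrefl y)

lemma not_Rsys_rel_elim {x y a b : L} (hab : a ≤ b)
    (h : ¬ (Rsys (G := G) x y).rel a b) :
    ∃ g : G, g • x ≤ a ∧ g • y ≤ b ∧ ¬ g • y ≤ a := by
  rw [Rsys_rel_iff] at h
  push_neg at h
  exact h hab

/-- Key rigidity lemma: any pair of `⌊x → y⌋` admits a translate under `(x, y)`. -/
lemma gen_sub {x y a b : L} (hxy : x ≤ y)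
    (h : (TransferSystem.gen (G := G) x y).rel a b) (hab : a ≠ b) :
    ∃ g : G, g • a ≤ x ∧ g • b ≤ y := by
  have hab' : a < b :=
    lt_of_le_of_ne ((TransferSystem.gen (G := G) x y).le_of_rel h) hab
  by_cases hR : (Rsys (G := G) a b).rel x y
  · exact absurd ((gen_le hxy).mpr hR h) (not_Rsys_self hab')
  · obtain ⟨g, h1, h2, -⟩ := not_Rsys_rel_elim hxy hR
    exact ⟨g, h1, h2⟩

/-- Key lemma: the only pairs `(c, y)` in `⌊x → y⌋` with `x ≤ c ≤ y` are trivial. -/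
lemma genF {x y c : L} (hxy : x ≤ y)
    (h : (TransferSystem.gen (G := G) x y).rel c y) (hxc : x ≤ c) (hcy : c ≠ y) :
    c = x := by
  obtain ⟨g, h1, h2⟩ := gen_sub hxy h hcy
  have hfix : g • c = c := smul_fix g (h1.trans hxc)
  rw [hfix] at h1
  exact le_antisymm h1 hxc

lemma orbit_mk {x y x' y' : L} {g h : G}
    (h1 : g • x' ≤ x) (h2 : g • y' ≤ y) (h3 : h • x ≤ x') (h4 : h • y ≤ y') :
    g • x' = x ∧ g • y' = y := by
  have e1 : (g * h) • x ≤ x := by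
    rw [mul_smul]; exact (smul_mono' g h3).trans h1
  have e2 : (g * h) • y ≤ y := by
    rw [mul_smul]; exact (smul_mono' g h4).trans h2
  have f1 := smul_fix _ e1
  have f2 := smul_fix _ e2
  constructor
  · refine le_antisymm h1 ?_
    calc x = g • h • x := by rw [← mul_smul, f1]
      _ ≤ g • x' := smul_mono' g h3
  · refine le_antisymm h2 ?_
    calc y = g • h • y := by rw [← mul_smul, f2]
      _ ≤ g • y' := smul_mono' g h4

lemma gen_smul (g : G) (x y : L) :
    TransferSystem.gen (G := G) (g • x) (g • y) = TransferSystem.gen (G := G) x y := by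
  unfold TransferSystem.gen
  congr 1
  ext T
  constructor
  · intro h
    have := T.smul_rel g⁻¹ h
    simpa using this
  · intro h
    exact T.smul_rel g h

lemma Rsys_smul (g : G) (x y : L) :
    Rsys (G := G) (g • x) (g • y) = Rsys (G := G) x y := by
  apply TransferSystem.ext'
  funext a b
  apply propext
  rw [Rsys_rel_iff, Rsys_rel_iff]
  constructor
  · rintro ⟨hab, H⟩
    refine ⟨hab, fun k h1 h2 => ?_⟩
    have := H (k * g⁻¹) (by rwa [mul_smul, inv_smul_smul]) (by rwa [mul_smul, inv_smul_smul])
    rwa [mul_smul, inv_smul_smul] at this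
  · rintro ⟨hab, H⟩
    refine ⟨hab, fun k h1 h2 => ?_⟩
    have := H (k * g) (by rwa [mul_smul]) (by rwa [mul_smul])
    rwa [mul_smul] at this

lemma gen_eq_orbit {x y x' y' : L} (hxy : x < y) (hx'y' : x' < y')
    (h : TransferSystem.gen (G := G) x y = TransferSystem.gen (G := G) x' y') :
    ∃ g : G, g • x' = x ∧ g • y' = y := by
  have h1 : (TransferSystem.gen (G := G) x y).rel x' y' := by
    rw [h]; exact gen_rel_self hx'y'.le
  have h2 : (TransferSystem.gen (G := G) x' y').rel x y := by
    rw [← h]; exact gen_rel_self hxy.le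
  obtain ⟨g, hg1, hg2⟩ := gen_sub hxy.le h1 hx'y'.ne
  obtain ⟨k, hk1, hk2⟩ := gen_sub hx'y'.le h2 hxy.ne
  obtain ⟨e1, e2⟩ := orbit_mk hg1 hg2 hk1 hk2
  exact ⟨g, e1, e2⟩

lemma Rsys_eq_orbit {x y x' y' : L} (hxy : x < y) (hx'y' : x' < y')
    (h : Rsys (G := G) x y = Rsys (G := G) x' y') :
    ∃ g : G, g • x' = x ∧ g • y' = y := by
  have h1 : ¬ (Rsys (G := G) x y).rel x' y' := by
    rw [h]; exact not_Rsys_self hx'y'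
  have h2 : ¬ (Rsys (G := G) x' y').rel x y := by
    rw [← h]; exact not_Rsys_self hxy
  obtain ⟨g, hg1, hg2, -⟩ := not_Rsys_rel_elim hxy.le h2
  obtain ⟨k, hk1, hk2, -⟩ := not_Rsys_rel_elim hx'y'.le h1
  obtain ⟨e1, e2⟩ := orbit_mk hg1 hg2 hk1 hk2
  exact ⟨g, e1, e2⟩

lemma rel_xy_of_gt {x y : L} (hxy : x < y) {a : TransferSystem G L}
    (h1 : Rsys (G := G) x y ≤ a) (h2 : a ≠ Rsys (G := G) x y) : a.rel x y := by
  have hnle : ¬ a ≤ Rsys (G := G) x y := fun hle => h2 (le_antisymm hle h1)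
  obtain ⟨u, v, hauv, hR⟩ : ∃ u v, a.rel u v ∧ ¬ (Rsys (G := G) x y).rel u v := by
    by_contra hc
    push_neg at hc
    exact hnle fun u v h => hc u v h
  obtain ⟨g, hg1, hg2, hg3⟩ := not_Rsys_rel_elim (a.le_of_rel hauv) hR
  obtain ⟨c, hxc, hcy, hacy⟩ := step g hxy.le hauv hg1 hg2 hg3
  exact a.trans (h1 (Rsys_rel_left hxc hcy)) hacy

lemma infIrred_Rsys {x y : L} (hxy : x < y) : InfIrred (Rsys (G := G) x y) := by
  constructor
  · intro hTop
    have h1 : Rsys (G := G) x y ≤ Rsys (G := G) x y ⊔ TransferSystem.gen (G := G) x y :=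
      le_sup_left
    have h2 := hTop h1
    have h3 : TransferSystem.gen (G := G) x y ≤ Rsys (G := G) x y :=
      le_sup_right.trans h2
    exact not_Rsys_self hxy ((gen_le hxy.le).mp h3)
  · intro a b hab
    by_contra hcon
    push_neg at hcon
    obtain ⟨ha, hb⟩ := hcon
    have haR : Rsys (G := G) x y ≤ a := hab ▸ inf_le_left
    have hbR : Rsys (G := G) x y ≤ b := hab ▸ inf_le_right
    have h1 := rel_xy_of_gt hxy haR ha
    have h2 := rel_xy_of_gt hxy hbR hb
    have : (a ⊓ b).rel x y := inf_rel.mpr ⟨hxy.le, h1, h2⟩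
    rw [hab] at this
    exact not_Rsys_self hxy this

lemma supIrred_gen {x y : L} (hxy : x < y) :
    SupIrred (TransferSystem.gen (G := G) x y) := by
  constructor
  · intro hBot
    have h1 : TransferSystem.gen (G := G) x y ⊓ Rsys (G := G) x y ≤
        TransferSystem.gen (G := G) x y := inf_le_left
    have h2 := hBot h1
    have h3 : TransferSystem.gen (G := G) x y ≤ Rsys (G := G) x y :=
      h2.trans inf_le_right
    exact not_Rsys_self hxy ((gen_le hxy.le).mp h3)
  · intro a b hab
    by_contra hcon
    push_neg at hcon
    obtain ⟨ha, hb⟩ := hcon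
    have haJ : a ≤ TransferSystem.gen (G := G) x y := hab ▸ le_sup_left
    have hbJ : b ≤ TransferSystem.gen (G := G) x y := hab ▸ le_sup_right
    have hax : ¬ a.rel x y := fun h => ha (le_antisymm haJ ((gen_le hxy.le).mpr h))
    have hbx : ¬ b.rel x y := fun h => hb (le_antisymm hbJ ((gen_le hxy.le).mpr h))
    have key : ∀ (c : TransferSystem G L), c ≤ TransferSystem.gen (G := G) x y →
        ¬ c.rel x y → c ≤ Rsys (G := G) x y := by
      intro c hcJ hcx u v hcuv
      rw [Rsys_rel_iff]
      refine ⟨c.le_of_rel hcuv, fun g hg1 hg2 => ?_⟩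
      by_contra hg3
      obtain ⟨d, hxd, hdy, hcdy⟩ := step g hxy.le hcuv hg1 hg2 hg3
      have hJ : (TransferSystem.gen (G := G) x y).rel d y := hcJ hcdy
      have hdx : d = x := genF hxy.le hJ hxd hdy.ne
      exact hcx (hdx ▸ hcdy)
    have : TransferSystem.gen (G := G) x y ≤ Rsys (G := G) x y := by
      rw [← hab]
      exact sup_le (key a haJ hax) (key b hbJ hbx)
    exact not_Rsys_self hxy ((gen_le hxy.le).mp this)

lemma infIrred_mem_of_eq_inf {α : Type*} [CompleteLattice α] {a : α} (ha : InfIrred a) :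
    ∀ F : Finset α, a = F.inf id → ∃ b ∈ F, b = a := by
  classical
  intro F
  induction F using Finset.induction_on with
  | empty =>
    intro h
    rw [Finset.inf_empty] at h
    exact absurd (h ▸ isMax_top) ha.1
  | @insert c F hc ih =>
    intro h
    rw [Finset.inf_insert] at h
    rcases ha.2 h.symm with h1 | h1
    · exact ⟨c, Finset.mem_insert_self _ _, h1⟩
    · obtain ⟨b, hb, hba⟩ := ih h1.symm
      exact ⟨b, Finset.mem_insert_of_mem hb, hba⟩

lemma supIrred_mem_of_eq_sup {α : Type*} [CompleteLattice α] {a : α} (ha : SupIrred a) :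
    ∀ F : Finset α, a = F.sup id → ∃ b ∈ F, b = a := by
  classical
  intro F
  induction F using Finset.induction_on with
  | empty =>
    intro h
    rw [Finset.sup_empty] at h
    exact absurd (h ▸ isMin_bot) ha.1
  | @insert c F hc ih =>
    intro h
    rw [Finset.sup_insert] at h
    rcases ha.2 h.symm with h1 | h1
    · exact ⟨c, Finset.mem_insert_self _ _, h1⟩
    · obtain ⟨b, hb, hba⟩ := ih h1.symm
      exact ⟨b, Finset.mem_insert_of_mem hb, hba⟩

variable [Finite L]

lemma exists_R_of_infIrred {T : TransferSystem G L} (hT : InfIrred T) :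
    ∃ x y : L, x < y ∧ T = Rsys (G := G) x y := by
  classical
  set S : Set (TransferSystem G L) :=
    {R' | ∃ x y : L, x < y ∧ R' = Rsys (G := G) x y ∧ T ≤ R'} with hS
  have hfin : S.Finite := Set.toFinite S
  have hTS : T = sInf S := by
    apply le_antisymm
    · exact le_sInf (by rintro R' ⟨x, y, hxy, rfl, hle⟩; exact hle)
    · intro u v huv
      by_contra hTuv
      obtain ⟨hle, hall⟩ := (sInf_rel S u v).mp huv
      have hne : ¬ v ≤ u := by
        intro h
        exact hTuv ((le_antisymm hle h) ▸ T.refl u)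
      -- find a minimal bad element
      have hvY : v ∈ {z : L | z ≤ v ∧ ¬ z ≤ u ∧ ¬ T.rel (u ⊓ z) z} :=
        ⟨le_rfl, hne, by rwa [inf_eq_left.mpr hle]⟩
      have hwf : WellFounded ((· < ·) : L → L → Prop) :=
        (Finite.to_wellFoundedLT (α := L)).wf
      obtain ⟨y₀, hy₀, hmin⟩ :=
        hwf.has_min {z : L | z ≤ v ∧ ¬ z ≤ u ∧ ¬ T.rel (u ⊓ z) z} ⟨v, hvY⟩
      set x₀ := u ⊓ y₀ with hx₀def
      have hx₀ : x₀ < y₀ :=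
        lt_of_le_of_ne inf_le_right (fun h => hy₀.2.1 (h ▸ inf_le_left))
      have hTR : T ≤ Rsys (G := G) x₀ y₀ := by
        intro a b hab
        rw [Rsys_rel_iff]
        refine ⟨T.le_of_rel hab, fun g hg1 hg2 => ?_⟩
        by_contra hg3
        obtain ⟨c, hx0c, hcy0, hTcy0⟩ := step g hx₀.le hab hg1 hg2 hg3
        by_cases hcu : c ≤ u
        · have hc : c = x₀ := le_antisymm (le_inf hcu hcy0.le) hx0c
          exact hy₀.2.2 (by rwa [hc, hx₀def] at hTcy0)
        · have hucx : u ⊓ c = x₀ := by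
            apply le_antisymm
            · exact le_inf inf_le_left (inf_le_right.trans hcy0.le)
            · exact le_inf inf_le_left hx0c
          have hcY : c ∈ {z : L | z ≤ v ∧ ¬ z ≤ u ∧ ¬ T.rel (u ⊓ z) z} := by
            refine ⟨hcy0.le.trans hy₀.1, hcu, fun hrel => ?_⟩
            have hthis : T.rel x₀ y₀ := T.trans (hucx ▸ hrel) hTcy0
            exact hy₀.2.2 (by rwa [hx₀def] at hthis)
          exact hmin c hcY hcy0
      have hmem : Rsys (G := G) x₀ y₀ ∈ S := ⟨x₀, y₀, hx₀, rfl, hTR⟩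
      have hmemrel := hall _ hmem
      rw [Rsys_rel_iff] at hmemrel
      have h1' : (1 : G) • x₀ ≤ u := by rw [one_smul, hx₀def]; exact inf_le_left
      have h2' : (1 : G) • y₀ ≤ v := by rw [one_smul]; exact hy₀.1
      have hfin' := hmemrel.2 1 h1' h2'
      rw [one_smul] at hfin'
      exact hy₀.2.1 hfin'
  have hTS' : T = hfin.toFinset.inf id := by
    rw [Finset.inf_id_eq_sInf, Set.Finite.coe_toFinset]
    exact hTS
  obtain ⟨b, hb, hba⟩ := infIrred_mem_of_eq_inf hT _ hTS'
  rw [Set.Finite.mem_toFinset] at hb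
  obtain ⟨x, y, hxy, rfl, -⟩ := hb
  exact ⟨x, y, hxy, hba.symm⟩

lemma exists_gen_of_supIrred {T : TransferSystem G L} (hT : SupIrred T) :
    ∃ x y : L, x < y ∧ T = TransferSystem.gen (G := G) x y := by
  classical
  set S : Set (TransferSystem G L) :=
    {J | ∃ u v : L, T.rel u v ∧ J = TransferSystem.gen (G := G) u v} with hS
  have hfin : S.Finite := Set.toFinite S
  have hTS : T = sSup S := by
    apply le_antisymm
    · intro u v h
      have hmem : TransferSystem.gen (G := G) u v ∈ S := ⟨u, v, h, rfl⟩
      exact le_sSup hmem (gen_rel_self (T.le_of_rel h))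
    · exact sSup_le (by rintro J ⟨u, v, huv, rfl⟩; exact (gen_le (T.le_of_rel huv)).mpr huv)
  have hTS' : T = hfin.toFinset.sup id := by
    rw [Finset.sup_id_eq_sSup, Set.Finite.coe_toFinset]
    exact hTS
  obtain ⟨b, hb, hba⟩ := supIrred_mem_of_eq_sup hT _ hTS'
  rw [Set.Finite.mem_toFinset] at hb
  obtain ⟨x, y, hxy, rfl⟩ := hb
  have hxley : x ≤ y := T.le_of_rel hxy
  rcases eq_or_lt_of_le hxley with rfl | hlt
  · exfalso
    apply hT.1
    intro T' _
    rw [← hba]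
    exact (gen_le (le_refl x)).mpr (T'.refl x)
  · exact ⟨x, y, hlt, hba.symm⟩

end FiniteBoth

lemma cogen_rel_smul {x y : L} (hxy : x ≤ y) (g : G) :
    (CoTransferSystem.gen (G := G) x y).rel (g • x) (g • y) :=
  ⟨smul_mono' g hxy, fun C hC => C.smul_rel g hC⟩

/-- The orbitwise lifting test as a cotransfer system. -/
def Dsys (a b : L) : CoTransferSystem G L where
  rel u v := u ≤ v ∧ ∀ g : G, g • u ≤ a → g • v ≤ b → g • v ≤ a
  refl u := ⟨le_rfl, fun _ h1 _ => h1⟩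
  trans := by
    rintro u v w ⟨huv, H1⟩ ⟨hvw, H2⟩
    refine ⟨huv.trans hvw, fun g h1 h2 => ?_⟩
    have hv : g • v ≤ b := (smul_mono' g hvw).trans h2
    exact H2 g (H1 g h1 hv) h2
  le_of_rel h := h.1
  smul_rel := by
    rintro h u v ⟨huv, H⟩
    refine ⟨smul_mono' h huv, fun g h1 h2 => ?_⟩
    have e1 : (g * h) • u ≤ a := by rwa [mul_smul]
    have e2 : (g * h) • v ≤ b := by rwa [mul_smul]
    have := H (g * h) e1 e2
    rwa [mul_smul] at this
  corestrict := by
    rintro u v y' ⟨huv, H⟩ hle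
    refine ⟨le_sup_right, fun g h1 h2 => ?_⟩
    rw [smul_sup'] at h2 ⊢
    have hvb : g • v ≤ b := le_sup_left.trans h2
    have hua : g • u ≤ a := (smul_mono' g hle).trans h1
    exact sup_le (H g hua hvb) h1

lemma rlp_eq {x y : L} (hxy : x ≤ y) :
    rlpRel (CoTransferSystem.gen (G := G) x y) = (Rsys (G := G) x y).rel := by
  funext a b
  apply propext
  constructor
  · rintro ⟨hab, H⟩
    exact ⟨hab, fun g h1 h2 => H (cogen_rel_smul hxy g) h1 h2⟩
  · rintro ⟨hab, H⟩
    refine ⟨hab, fun u v huv hu hv => ?_⟩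
    have hD : (Dsys (G := G) a b).rel x y := ⟨hxy, H⟩
    have hDuv := huv.2 (Dsys (G := G) a b) hD
    have := hDuv.2 1 (by simpa using hu) (by simpa using hv)
    simpa using this

end TSAux

/-- The meet-irreducible elements of `Tr(L)` are exactly the
`⌈x → y⌉^⊠` with `x < y`; the map `⌊x → y⌋ ↦ ⌈x → y⌉^⊠` is a well-defined bijection
from the join-irreducibles to the meet-irreducibles; in particular the number of
meet-irreducibles equals the number of `G`-orbits of pairs `x < y`. -/
theorem infIrred_characterization {G L : Type*} [Group G] [Finite G] [Lattice L] [Finite L]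
    [MulAction G L] [CovariantClass G L (· • ·) (· ≤ ·)] :
    ({T : TransferSystem G L | InfIrred T} =
        {T : TransferSystem G L | ∃ x y : L, x < y ∧
          T.rel = rlpRel (CoTransferSystem.gen (G := G) x y)}) ∧
    (∃ F : {T : TransferSystem G L // SupIrred T} → {T : TransferSystem G L // InfIrred T},
        Function.Bijective F ∧
        ∀ (x y : L) (hxy : x < y) (hT : SupIrred (TransferSystem.gen (G := G) x y)),
          (F ⟨TransferSystem.gen x y, hT⟩).1.rel = rlpRel (CoTransferSystem.gen (G := G) x y)) ∧
    Nat.card {T : TransferSystem G L // InfIrred T} =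
      Nat.card (Quotient (pairOrbitSetoid G L)) := by
  classical
  obtain ⟨hG, hL⟩ : True ∧ True := ⟨trivial, trivial⟩
  -- Part 1: the set equality
  have part1 : ({T : TransferSystem G L | InfIrred T} =
      {T : TransferSystem G L | ∃ x y : L, x < y ∧
        T.rel = rlpRel (CoTransferSystem.gen (G := G) x y)}) := by
    ext T
    simp only [Set.mem_setOf_eq]
    constructor
    · intro h
      obtain ⟨x, y, hxy, hTeq⟩ := TSAux.exists_R_of_infIrred h
      exact ⟨x, y, hxy, by rw [hTeq, TSAux.rlp_eq hxy.le]⟩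
    · rintro ⟨x, y, hxy, hrel⟩
      have : T = TSAux.Rsys (G := G) x y :=
        TransferSystem.ext' (by rw [hrel, TSAux.rlp_eq hxy.le])
      exact this ▸ TSAux.infIrred_Rsys hxy
  -- orbit lemma for pairs
  have orbit_R : ∀ (p q : {p : L × L // p.1 < p.2}),
      (∃ g : G, g • p.1 = q.1) →
      TSAux.Rsys (G := G) p.1.1 p.1.2 = TSAux.Rsys (G := G) q.1.1 q.1.2 := by
    rintro ⟨⟨x, y⟩, hp⟩ ⟨⟨x', y'⟩, hq⟩ ⟨g, hg⟩
    simp only [Prod.smul_mk, Prod.mk.injEq] at hg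
    obtain ⟨h1, h2⟩ := hg
    simp only at *
    rw [← h1, ← h2, TSAux.Rsys_smul]
  -- Part 3: the bijection with the orbit quotient
  have part3 : Nat.card {T : TransferSystem G L // InfIrred T} =
      Nat.card (Quotient (pairOrbitSetoid G L)) := by
    have hresp : ∀ (p q : {p : L × L // p.1 < p.2}), (pairOrbitSetoid G L).r p q →
        (⟨TSAux.Rsys (G := G) p.1.1 p.1.2, TSAux.infIrred_Rsys p.2⟩ :
          {T : TransferSystem G L // InfIrred T}) =
        ⟨TSAux.Rsys (G := G) q.1.1 q.1.2, TSAux.infIrred_Rsys q.2⟩ := by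
      intro p q hpq
      exact Subtype.ext (orbit_R p q hpq)
    let f : Quotient (pairOrbitSetoid G L) → {T : TransferSystem G L // InfIrred T} :=
      Quotient.lift (fun p => ⟨TSAux.Rsys (G := G) p.1.1 p.1.2, TSAux.infIrred_Rsys p.2⟩) hresp
    have hbij : Function.Bijective f := by
      constructor
      · intro q1 q2
        induction q1 using Quotient.ind with
        | _ p =>
        induction q2 using Quotient.ind with
        | _ q =>
        intro h
        have hval : TSAux.Rsys (G := G) p.1.1 p.1.2 = TSAux.Rsys (G := G) q.1.1 q.1.2 :=
          congrArg Subtype.val h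
        obtain ⟨g, hg1, hg2⟩ := TSAux.Rsys_eq_orbit p.2 q.2 hval
        apply Quotient.sound
        exact ⟨g⁻¹, by
          have : g • (q.1.1, q.1.2) = (p.1.1, p.1.2) := by
            rw [Prod.smul_mk, hg1, hg2]
          have h' : g • q.1 = p.1 := by
            simpa using this
          rw [← h', inv_smul_smul]⟩
      · rintro ⟨T, hT⟩
        obtain ⟨x, y, hxy, hTeq⟩ := TSAux.exists_R_of_infIrred hT
        refine ⟨Quotient.mk _ ⟨(x, y), hxy⟩, ?_⟩
        exact Subtype.ext hTeq.symm
    exact (Nat.card_eq_of_bijective f hbij).symm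
  -- Part 2: the bijection F
  have part2 : ∃ F : {T : TransferSystem G L // SupIrred T} →
      {T : TransferSystem G L // InfIrred T},
      Function.Bijective F ∧
      ∀ (x y : L) (hxy : x < y) (hT : SupIrred (TransferSystem.gen (G := G) x y)),
        (F ⟨TransferSystem.gen x y, hT⟩).1.rel =
          rlpRel (CoTransferSystem.gen (G := G) x y) := by
    have hchoice : ∀ T : {T : TransferSystem G L // SupIrred T},
        ∃ p : L × L, p.1 < p.2 ∧ T.1 = TransferSystem.gen (G := G) p.1 p.2 := by
      intro T
      obtain ⟨x, y, h1, h2⟩ := TSAux.exists_gen_of_supIrred T.2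
      exact ⟨(x, y), h1, h2⟩
    let pk : {T : TransferSystem G L // SupIrred T} → L × L := fun T => (hchoice T).choose
    have pk1 : ∀ T, (pk T).1 < (pk T).2 := fun T => (hchoice T).choose_spec.1
    have pk2 : ∀ T, T.1 = TransferSystem.gen (G := G) (pk T).1 (pk T).2 :=
      fun T => (hchoice T).choose_spec.2
    let F : {T : TransferSystem G L // SupIrred T} → {T : TransferSystem G L // InfIrred T} :=
      fun T => ⟨TSAux.Rsys (G := G) (pk T).1 (pk T).2, TSAux.infIrred_Rsys (pk1 T)⟩
    have keyR : ∀ (T : {T : TransferSystem G L // SupIrred T}) (x y : L), x < y →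
        T.1 = TransferSystem.gen (G := G) x y →
        TSAux.Rsys (G := G) (pk T).1 (pk T).2 = TSAux.Rsys (G := G) x y := by
      intro T x y hxy hTeq
      have hg : TransferSystem.gen (G := G) x y =
          TransferSystem.gen (G := G) (pk T).1 (pk T).2 := by
        rw [← hTeq]; exact pk2 T
      obtain ⟨g, hg1, hg2⟩ := TSAux.gen_eq_orbit hxy (pk1 T) hg
      rw [← hg1, ← hg2, TSAux.Rsys_smul]
    refine ⟨F, ⟨?_, ?_⟩, ?_⟩
    · -- injective
      intro T1 T2 h
      have hval : TSAux.Rsys (G := G) (pk T1).1 (pk T1).2 =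
          TSAux.Rsys (G := G) (pk T2).1 (pk T2).2 := congrArg Subtype.val h
      obtain ⟨g, hg1, hg2⟩ := TSAux.Rsys_eq_orbit (pk1 T1) (pk1 T2) hval
      apply Subtype.ext
      rw [pk2 T1, pk2 T2, ← hg1, ← hg2, TSAux.gen_smul]
    · -- surjective
      rintro ⟨S, hS⟩
      obtain ⟨x, y, hxy, hSeq⟩ := TSAux.exists_R_of_infIrred hS
      refine ⟨⟨TransferSystem.gen (G := G) x y, TSAux.supIrred_gen hxy⟩, ?_⟩
      apply Subtype.ext
      have := keyR ⟨TransferSystem.gen (G := G) x y, TSAux.supIrred_gen hxy⟩ x y hxy rfl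
      rw [show F ⟨TransferSystem.gen (G := G) x y, TSAux.supIrred_gen hxy⟩ =
          ⟨TSAux.Rsys (G := G) (pk ⟨TransferSystem.gen (G := G) x y, TSAux.supIrred_gen hxy⟩).1
            (pk ⟨TransferSystem.gen (G := G) x y, TSAux.supIrred_gen hxy⟩).2, _⟩ from rfl]
      simp only
      rw [this, hSeq]
    · -- compatibility
      intro x y hxy hT
      have := keyR ⟨TransferSystem.gen (G := G) x y, hT⟩ x y hxy rfl
      show (TSAux.Rsys (G := G) (pk ⟨TransferSystem.gen (G := G) x y, hT⟩).1
          (pk ⟨TransferSystem.gen (G := G) x y, hT⟩).2).rel =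
        rlpRel (CoTransferSystem.gen (G := G) x y)
      rw [this, TSAux.rlp_eq hxy.le]
  exact ⟨part1, part2, part3⟩
end

section
/- Let L be a finite G-lattice and let a, b, x, y ∈ L with a < b and x < y. Then ⌊a → b⌋ ⊆ ⌈x → y⌉^⊠ if and only if for every g ∈ G at least one of the following holds: x ≰ g·a, or y ≰ g·b, or y ≤ g·a. -/
section Aux

variable {G L : Type*} [Group G] [Lattice L] [MulAction G L]
  [CovariantClass G L (· • ·) (· ≤ ·)]

lemma smul_sup' (g : G) (p q : L) : g • (p ⊔ q) = g • p ⊔ g • q := by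
  apply le_antisymm
  · rw [← smul_inv_smul g (g • p ⊔ g • q)]
    refine TransferSystem.smul_mono' g (sup_le ?_ ?_)
    · have := TransferSystem.smul_mono' g⁻¹ (le_sup_left : g • p ≤ g • p ⊔ g • q)
      rwa [inv_smul_smul] at this
    · have := TransferSystem.smul_mono' g⁻¹ (le_sup_right : g • q ≤ g • p ⊔ g • q)
      rwa [inv_smul_smul] at this
  · exact sup_le (TransferSystem.smul_mono' g le_sup_left)
      (TransferSystem.smul_mono' g le_sup_right)

/-- The right lifting class of a cotransfer system is a transfer system. -/
def rlpTS (C : CoTransferSystem G L) : TransferSystem G L where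
  rel u v := rlpRel C u v
  refl u := ⟨le_rfl, fun _ _ _ _ hqu => hqu⟩
  trans := by
    rintro u v w ⟨huv, h1⟩ ⟨hvw, h2⟩
    refine ⟨huv.trans hvw, fun p q hpq hpu hqw => ?_⟩
    have h3 : C.rel v (q ⊔ v) := C.corestrict hpq (hpu.trans huv)
    have h4 : q ⊔ v ≤ v := h2 h3 le_rfl (sup_le hqw hvw)
    exact h1 hpq hpu (le_sup_left.trans h4)
  le_of_rel h := h.1
  smul_rel := by
    rintro g u v ⟨huv, h⟩
    refine ⟨TransferSystem.smul_mono' g huv, fun p q hpq hpu hqv => ?_⟩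
    have hpu' : g⁻¹ • p ≤ u := by
      have := TransferSystem.smul_mono' g⁻¹ hpu
      rwa [inv_smul_smul] at this
    have hqv' : g⁻¹ • q ≤ v := by
      have := TransferSystem.smul_mono' g⁻¹ hqv
      rwa [inv_smul_smul] at this
    have := h (C.smul_rel g⁻¹ hpq) hpu' hqv'
    have := TransferSystem.smul_mono' g this
    rwa [smul_inv_smul] at this
  restrict := by
    rintro u v u' ⟨huv, h⟩ hu'v
    refine ⟨inf_le_right, fun p q hpq hp hq => ?_⟩
    exact le_inf (h hpq (hp.trans inf_le_left) (hq.trans hu'v)) hq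

/-- A "guard" cotransfer system used to reduce the RLP at `(a, b)` to generator pairs. -/
def guardCTS (a b : L) : CoTransferSystem G L where
  rel p q := p ≤ q ∧ ∀ g : G, g • p ≤ a → g • q ≤ b → g • q ≤ a
  refl p := ⟨le_rfl, fun _ h _ => h⟩
  trans := by
    rintro p q r ⟨hpq, h1⟩ ⟨hqr, h2⟩
    refine ⟨hpq.trans hqr, fun g hp hr => ?_⟩
    have hq : g • q ≤ b := (TransferSystem.smul_mono' g hqr).trans hr
    exact h2 g (h1 g hp hq) hr
  le_of_rel h := h.1
  smul_rel := by
    rintro g p q ⟨hpq, h⟩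
    refine ⟨TransferSystem.smul_mono' g hpq, fun g' hp hq => ?_⟩
    have hp' : (g' * g) • p ≤ a := by rwa [mul_smul]
    have hq' : (g' * g) • q ≤ b := by rwa [mul_smul]
    have := h (g' * g) hp' hq'
    rwa [mul_smul] at this
  corestrict := by
    rintro p q q' ⟨hpq, h⟩ hpq'
    refine ⟨le_sup_right, fun g hq' hsup => ?_⟩
    rw [smul_sup'] at hsup ⊢
    have hq : g • q ≤ a :=
      h g ((TransferSystem.smul_mono' g hpq').trans hq') (le_sup_left.trans hsup)
    exact sup_le hq hq'

end Aux

/-- For `a < b` and `x < y` in a finite `G`-lattice,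
`⌊a → b⌋ ⊆ ⌈x → y⌉^⊠` iff for every `g ∈ G`, `x ≰ g • a` or `y ≰ g • b` or `y ≤ g • a`. -/
theorem gen_le_rlp_iff {G L : Type*} [Group G] [Finite G] [Lattice L] [Finite L]
    [MulAction G L] [CovariantClass G L (· • ·) (· ≤ ·)]
    (a b x y : L) (hab : a < b) (hxy : x < y) :
    (∀ ⦃u v : L⦄, (TransferSystem.gen (G := G) a b).rel u v →
        rlpRel (CoTransferSystem.gen (G := G) x y) u v) ↔
      ∀ g : G, ¬ x ≤ g • a ∨ ¬ y ≤ g • b ∨ y ≤ g • a := by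
  have hCxy : (CoTransferSystem.gen (G := G) x y).rel x y := ⟨hxy.le, fun _ hC => hC⟩
  have hgab : (TransferSystem.gen (G := G) a b).rel a b :=
    (TransferSystem.sInf_rel _ a b).2 ⟨hab.le, fun _ hT => hT⟩
  constructor
  · intro H g
    by_cases h1 : x ≤ g • a
    · by_cases h2 : y ≤ g • b
      · exact Or.inr (Or.inr ((H ((TransferSystem.gen a b).smul_rel g hgab)).2 hCxy h1 h2))
      · exact Or.inr (Or.inl h2)
    · exact Or.inl h1
  · intro H u v huv
    have hDxy : (guardCTS (G := G) a b).rel x y := by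
      refine ⟨hxy.le, fun g hga hgb => ?_⟩
      have hx : x ≤ g⁻¹ • a := by
        have := TransferSystem.smul_mono' g⁻¹ hga
        rwa [inv_smul_smul] at this
      have hy : y ≤ g⁻¹ • b := by
        have := TransferSystem.smul_mono' g⁻¹ hgb
        rwa [inv_smul_smul] at this
      rcases H g⁻¹ with h | h | h
      · exact absurd hx h
      · exact absurd hy h
      · have := TransferSystem.smul_mono' g h
        rwa [smul_inv_smul] at this
    have hTab : (rlpTS (CoTransferSystem.gen (G := G) x y)).rel a b := by
      refine ⟨hab.le, fun p q hpq hpa hqb => ?_⟩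
      have := (hpq.2 (guardCTS a b) hDxy).2 1 (by rwa [one_smul]) (by rwa [one_smul])
      rwa [one_smul] at this
    exact huv.2 (rlpTS (CoTransferSystem.gen (G := G) x y)) hTab
end

section
/- Let L be a finite G-lattice with maximum element ⊤. Then the set of join-irreducible elements of the complete lattice coSat(L) of cosaturated transfer systems on L is exactly {⌊x → ⊤⌋ : x ∈ L, x ≠ ⊤}, and the assignment x ↦ ⌊x → ⊤⌋ induces a bijection from the set of G-orbits of L ∖ {⊤} to the set of join-irreducible elements of coSat(L). In particular, the number of join-irreducible elements of coSat(L) equals the number of G-orbits of L minus one. -/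
namespace TransferSystem

variable {G L : Type*} [Group G] [Lattice L] [OrderTop L] [MulAction G L]
  [CovariantClass G L (· • ·) (· ≤ ·)]

/-- A transfer system is cosaturated if it is a join of transfer systems of the form
`⌊x → ⊤⌋`. -/
def IsCosaturated (T : TransferSystem G L) : Prop :=
  ∃ X : Set L, T = ⨆ x ∈ X, TransferSystem.gen (G := G) x ⊤

/-- Join-irreducibility in the complete lattice `coSat(L)` of cosaturated transfer systems
(whose bottom element and binary joins agree with those of `Tr(L)`). -/
def CoSatSupIrred (T : TransferSystem G L) : Prop :=
  IsCosaturated T ∧ T ≠ ⊥ ∧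
    ∀ B C : TransferSystem G L, IsCosaturated B → IsCosaturated C → B ⊔ C = T →
      B = T ∨ C = T

end TransferSystem

set_option linter.unusedSectionVars false

namespace TransferSystem

variable {G L : Type*} [Group G] [Lattice L] [OrderTop L] [MulAction G L]
  [CovariantClass G L (· • ·) (· ≤ ·)]

lemma smul_inv_le' {g : G} {x y : L} (h : x ≤ g • y) : g⁻¹ • x ≤ y := by
  simpa using smul_mono' g⁻¹ h

lemma smul_top' (g : G) : g • (⊤ : L) = ⊤ := by
  refine le_antisymm le_top ?_
  have := smul_mono' g (le_top (a := g⁻¹ • (⊤ : L)))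
  simpa using this

lemma smul_inf' (g : G) (a b : L) : g • (a ⊓ b) = g • a ⊓ g • b := by
  refine le_antisymm (le_inf (smul_mono' g inf_le_left) (smul_mono' g inf_le_right)) ?_
  have h : g⁻¹ • (g • a ⊓ g • b) ≤ a ⊓ b :=
    le_inf (smul_inv_le' inf_le_left) (smul_inv_le' inf_le_right)
  simpa using smul_mono' g h

lemma smul_finset_inf (g : G) (s : Finset L) (f : L → L) :
    g • s.inf f = s.inf fun b => g • f b := by
  induction s using Finset.cons_induction with
  | empty => simpa using smul_top' g
  | cons b s hb ih => rw [Finset.inf_cons, Finset.inf_cons, smul_inf', ih]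

/-- The transfer system generated by the pairs `(a, ⊤)`, `a ∈ A`, described explicitly:
`u → v` iff `u = m ⊓ v` where `m` is a meet of finitely many `G`-translates of
elements of `A`. -/
def genSet (A : Set L) : TransferSystem G L where
  rel u v := ∃ s : Finset L, (∀ b ∈ s, ∃ g : G, ∃ a ∈ A, b = g • a) ∧ u = s.inf id ⊓ v
  refl x := ⟨∅, by simp, by simp⟩
  trans := by
    classical
    rintro x y z ⟨s, hs, rfl⟩ ⟨t, ht, rfl⟩
    refine ⟨s ∪ t, fun b hb => (Finset.mem_union.1 hb).elim (hs b) (ht b), ?_⟩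
    rw [Finset.inf_union, inf_assoc]
  le_of_rel := by rintro x y ⟨s, hs, rfl⟩; exact inf_le_right
  smul_rel := by
    classical
    rintro g x y ⟨s, hs, rfl⟩
    refine ⟨s.image (g • ·), ?_, ?_⟩
    · intro b hb
      obtain ⟨c, hc, rfl⟩ := Finset.mem_image.1 hb
      obtain ⟨g', a, ha, rfl⟩ := hs c hc
      exact ⟨g * g', a, ha, (mul_smul g g' a).symm⟩
    · rw [smul_inf', smul_finset_inf, Finset.inf_image]
      rfl
  restrict := by
    rintro x y x' ⟨s, hs, rfl⟩ hle
    exact ⟨s, hs, by rw [inf_assoc, inf_eq_right.2 hle]⟩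

lemma gen_rel_self_top (x : L) : (gen (G := G) x ⊤).rel x ⊤ :=
  (sInf_rel _ _ _).2 ⟨le_top, fun _ hT => hT⟩

lemma gen_top_le {x : L} {T : TransferSystem G L} (h : T.rel x ⊤) :
    gen (G := G) x ⊤ ≤ T := sInf_le h

lemma genSet_le {A : Set L} {T : TransferSystem G L} (h : ∀ a ∈ A, T.rel a ⊤) :
    genSet (G := G) A ≤ T := by
  rintro u v ⟨s, hs, rfl⟩
  induction s using Finset.cons_induction with
  | empty => simpa using T.refl v
  | cons b s hb ih =>
    have hbrel : T.rel b ⊤ := by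
      obtain ⟨g, a, ha, rfl⟩ := hs b (Finset.mem_cons_self b s)
      have := T.smul_rel g (h a ha)
      rwa [smul_top'] at this
    have h1 : T.rel (s.inf id ⊓ v) v := ih fun c hc => hs c (Finset.mem_cons.2 (Or.inr hc))
    have h2 : T.rel (b ⊓ (s.inf id ⊓ v)) (s.inf id ⊓ v) := T.restrict hbrel le_top
    have h3 := T.trans h2 h1
    rw [Finset.inf_cons]
    rwa [← inf_assoc] at h3

lemma genSet_rel_of_mem {A : Set L} {a : L} (ha : a ∈ A) :
    (genSet (G := G) A).rel a ⊤ :=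
  ⟨{a}, by
    intro b hb
    rw [Finset.mem_singleton] at hb
    exact ⟨1, a, ha, by rw [hb, one_smul]⟩, by simp⟩

lemma genSet_eq_iSup (A : Set L) :
    genSet (G := G) A = ⨆ a ∈ A, gen (G := G) a ⊤ := by
  refine le_antisymm (genSet_le fun a ha => ?_) (iSup₂_le fun a ha => gen_top_le (genSet_rel_of_mem ha))
  exact le_iSup₂ (f := fun a (_ : a ∈ A) => gen (G := G) a ⊤) a ha (gen_rel_self_top a)

lemma gen_top_eq_genSet_singleton (x : L) :
    gen (G := G) x ⊤ = genSet (G := G) {x} := by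
  rw [genSet_eq_iSup]
  simp

lemma gen_top_rel_iff {x u v : L} :
    (gen (G := G) x ⊤).rel u v ↔
      ∃ s : Finset L, (∀ b ∈ s, ∃ g : G, b = g • x) ∧ u = s.inf id ⊓ v := by
  rw [gen_top_eq_genSet_singleton]
  constructor
  · rintro ⟨s, hs, rfl⟩
    refine ⟨s, fun b hb => ?_, rfl⟩
    obtain ⟨g, a, ha, rfl⟩ := hs b hb
    rw [Set.mem_singleton_iff] at ha
    exact ⟨g, by rw [ha]⟩
  · rintro ⟨s, hs, rfl⟩
    refine ⟨s, fun b hb => ?_, rfl⟩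
    obtain ⟨g, rfl⟩ := hs b hb
    exact ⟨g, x, rfl, rfl⟩

lemma gen_top_eq_of_smul (g : G) (x : L) :
    gen (G := G) (g • x) ⊤ = gen (G := G) x ⊤ := by
  refine le_antisymm (gen_top_le ?_) (gen_top_le ?_)
  · have := (gen (G := G) x ⊤).smul_rel g (gen_rel_self_top x)
    rwa [smul_top'] at this
  · have := (gen (G := G) (g • x) ⊤).smul_rel g⁻¹ (gen_rel_self_top (g • x))
    rwa [smul_top', inv_smul_smul] at this

/-- The discrete transfer system. -/
def discreteTS : TransferSystem G L where
  rel x y := x = y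
  refl _ := rfl
  trans h1 h2 := h1.trans h2
  le_of_rel h := h.le
  smul_rel := by rintro g x y rfl; rfl
  restrict := by rintro x y x' rfl h; exact inf_eq_right.2 h

lemma bot_rel_iff {u v : L} : (⊥ : TransferSystem G L).rel u v ↔ u = v := by
  constructor
  · intro h
    exact (bot_le : (⊥ : TransferSystem G L) ≤ discreteTS) h
  · rintro rfl; exact (⊥ : TransferSystem G L).refl u

lemma gen_ne_bot {x : L} (hx : x ≠ ⊤) : gen (G := G) x ⊤ ≠ (⊥ : TransferSystem G L) := by
  intro h
  have := gen_rel_self_top (G := G) x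
  rw [h] at this
  exact hx (bot_rel_iff.1 this)

lemma gen_top_top : gen (G := G) (⊤ : L) ⊤ = (⊥ : TransferSystem G L) :=
  le_antisymm (gen_top_le ((⊥ : TransferSystem G L).refl ⊤)) bot_le

lemma gen_top_isCosaturated (x : L) : IsCosaturated (gen (G := G) x ⊤) :=
  ⟨{x}, by simp⟩

section FiniteG
variable [Finite G]

lemma smul_eq_self_of_le {k : G} {y : L} (h : y ≤ k • y) : k • y = y := by
  have hm : ∀ n : ℕ, y ≤ k ^ n • y := by
    intro n
    induction n with
    | zero => simp
    | succ n ih =>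
      calc y ≤ k • y := h
        _ ≤ k • (k ^ n • y) := smul_mono' k ih
        _ = k ^ (n + 1) • y := by rw [← mul_smul, ← pow_succ']
  refine le_antisymm ?_ h
  have h1 : y ≤ k ^ (orderOf k - 1) • y := hm _
  have h2 := smul_mono' k h1
  rwa [← mul_smul, ← pow_succ',
    Nat.sub_add_cancel (Nat.one_le_iff_ne_zero.2 (orderOf_pos k).ne'),
    pow_orderOf_eq_one, one_smul] at h2

lemma eq_of_le_smul_le {g h : G} {x y : L} (h1 : y ≤ g • x) (h2 : x ≤ h • y) :
    g • x = y := by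
  have hk : y ≤ (g * h) • y := h1.trans (by rw [mul_smul]; exact smul_mono' g h2)
  have he := smul_eq_self_of_le hk
  refine le_antisymm ?_ h1
  calc g • x ≤ g • (h • y) := smul_mono' g h2
    _ = (g * h) • y := (mul_smul g h y).symm
    _ = y := he

lemma gen_top_inj {x y : L} (hx : x ≠ ⊤) (hy : y ≠ ⊤)
    (h : gen (G := G) x ⊤ = gen (G := G) y ⊤) : ∃ g : G, g • x = y := by
  have hxy : (gen (G := G) y ⊤).rel x ⊤ := by rw [← h]; exact gen_rel_self_top x
  have hyx : (gen (G := G) x ⊤).rel y ⊤ := by rw [h]; exact gen_rel_self_top y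
  obtain ⟨s, hs, hxeq⟩ := gen_top_rel_iff.1 hxy
  obtain ⟨t, ht, hyeq⟩ := gen_top_rel_iff.1 hyx
  rw [inf_top_eq] at hxeq hyeq
  have hsne : s.Nonempty := by
    rcases s.eq_empty_or_nonempty with rfl | hne
    · exact absurd (by simpa using hxeq) hx
    · exact hne
  have htne : t.Nonempty := by
    rcases t.eq_empty_or_nonempty with rfl | hne
    · exact absurd (by simpa using hyeq) hy
    · exact hne
  obtain ⟨b, hb⟩ := hsne
  obtain ⟨c, hc⟩ := htne
  obtain ⟨g, rfl⟩ := hs b hb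
  obtain ⟨h', rfl⟩ := ht c hc
  have h1 : x ≤ g • y := hxeq.le.trans (Finset.inf_le hb)
  have h2 : y ≤ h' • x := hyeq.le.trans (Finset.inf_le hc)
  have hgy : g • y = x := eq_of_le_smul_le h1 h2
  exact ⟨g⁻¹, by rw [← hgy, inv_smul_smul]⟩

lemma coSatSupIrred_gen {x : L} (hx : x ≠ ⊤) : CoSatSupIrred (gen (G := G) x ⊤) := by
  refine ⟨gen_top_isCosaturated x, gen_ne_bot hx, ?_⟩
  rintro B C ⟨XB, rfl⟩ ⟨XC, rfl⟩ hBC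
  have hBC' : genSet (G := G) (XB ∪ XC) = gen (G := G) x ⊤ := by
    rw [genSet_eq_iSup, iSup_union, hBC]
  -- find a ∈ XB ∪ XC and g with g • a = x
  have hrel : (genSet (G := G) (XB ∪ XC)).rel x ⊤ := by
    rw [hBC']; exact gen_rel_self_top x
  obtain ⟨s, hs, hxeq⟩ := hrel
  rw [inf_top_eq] at hxeq
  have hbne : ∃ b ∈ s, b ≠ ⊤ := by
    by_contra hcon
    push_neg at hcon
    apply hx
    rw [hxeq]
    exact le_antisymm le_top (Finset.le_inf fun b hb => (hcon b hb).ge)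
  obtain ⟨b, hb, hbtop⟩ := hbne
  obtain ⟨g, a, haZ, rfl⟩ := hs b hb
  have hane : a ≠ ⊤ := fun h => hbtop (by rw [h, smul_top'])
  have h1 : x ≤ g • a := hxeq.le.trans (Finset.inf_le hb)
  have hrel2 : (gen (G := G) x ⊤).rel a ⊤ := by
    rw [← hBC']; exact genSet_rel_of_mem haZ
  obtain ⟨t, ht, haeq⟩ := gen_top_rel_iff.1 hrel2
  rw [inf_top_eq] at haeq
  have htne : t.Nonempty := by
    rcases t.eq_empty_or_nonempty with rfl | hne
    · exact absurd (by simpa using haeq) hane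
    · exact hne
  obtain ⟨c, hc⟩ := htne
  obtain ⟨h', rfl⟩ := ht c hc
  have h2 : a ≤ h' • x := haeq.le.trans (Finset.inf_le hc)
  have hga : g • a = x := eq_of_le_smul_le h1 h2
  have hgen : gen (G := G) a ⊤ = gen (G := G) x ⊤ := by
    rw [← hga, gen_top_eq_of_smul]
  rcases haZ with haB | haC
  · left
    refine le_antisymm (le_sup_left.trans hBC.le) ?_
    rw [← hgen]
    exact le_iSup₂ (f := fun a (_ : a ∈ XB) => gen (G := G) a ⊤) a haB
  · right
    refine le_antisymm (le_sup_right.trans hBC.le) ?_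
    rw [← hgen]
    exact le_iSup₂ (f := fun a (_ : a ∈ XC) => gen (G := G) a ⊤) a haC

end FiniteG

lemma eq_gen_of_coSatSupIrred [Finite L] {T : TransferSystem G L}
    (hT : CoSatSupIrred T) : ∃ x : L, x ≠ ⊤ ∧ T = gen (G := G) x ⊤ := by
  obtain ⟨⟨X, hX⟩, hbot, hirr⟩ := hT
  have key : ∀ s : Finset L, T = ⨆ x ∈ (s : Set L), gen (G := G) x ⊤ →
      ∃ x : L, x ≠ ⊤ ∧ T = gen (G := G) x ⊤ := by
    intro s
    induction s using Finset.cons_induction with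
    | empty =>
      intro h
      rw [Finset.coe_empty, iSup_emptyset] at h
      exact absurd h hbot
    | cons a s ha ih =>
      intro h
      rw [Finset.coe_cons, iSup_insert] at h
      rcases hirr _ _ (gen_top_isCosaturated a) ⟨s, rfl⟩ h.symm with h1 | h1
      · rcases eq_or_ne a ⊤ with rfl | hne
        · rw [gen_top_top] at h1
          exact absurd h1.symm hbot
        · exact ⟨a, hne, h1.symm⟩
      · exact ih h1.symm
  exact key X.toFinite.toFinset (by rwa [Set.Finite.coe_toFinset])

end TransferSystem

/-- The join-irreducible elements of `coSat(L)` are exactly the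
`⌊x → ⊤⌋` with `x ≠ ⊤`; the assignment `x ↦ ⌊x → ⊤⌋` induces a bijection from the
`G`-orbits of `L ∖ {⊤}` to the join-irreducibles of `coSat(L)`; in particular their number
equals the number of `G`-orbits of `L` minus one. -/
theorem coSat_supIrred_characterization {G L : Type*} [Group G] [Finite G] [Lattice L]
    [OrderTop L] [Finite L] [MulAction G L] [CovariantClass G L (· • ·) (· ≤ ·)] :
    ({T : TransferSystem G L | TransferSystem.CoSatSupIrred T} =
        {T : TransferSystem G L | ∃ x : L, x ≠ ⊤ ∧ T = TransferSystem.gen x ⊤}) ∧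
    (∀ x y : L, x ≠ ⊤ → y ≠ ⊤ →
      (TransferSystem.gen (G := G) x ⊤ = TransferSystem.gen (G := G) y ⊤ ↔
        ∃ g : G, g • x = y)) ∧
    Nat.card {T : TransferSystem G L // TransferSystem.CoSatSupIrred T} =
      Nat.card (Quotient (MulAction.orbitRel G L)) - 1 := by
  classical
  open TransferSystem in
  refine ⟨?_, ?_, ?_⟩
  · ext T
    simp only [Set.mem_setOf_eq]
    constructor
    · exact eq_gen_of_coSatSupIrred
    · rintro ⟨x, hx, rfl⟩
      exact coSatSupIrred_gen hx
  · intro x y hx hy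
    constructor
    · exact gen_top_inj hx hy
    · rintro ⟨g, rfl⟩
      exact (gen_top_eq_of_smul g x).symm
  · -- counting
    set Q := Quotient (MulAction.orbitRel G L) with hQ
    set t : Q := Quotient.mk (MulAction.orbitRel G L) ⊤ with hts
    have hF : ∀ a b : L, (MulAction.orbitRel G L).r a b →
        gen (G := G) a ⊤ = gen (G := G) b ⊤ := by
      intro a b hab
      obtain ⟨g, rfl⟩ := MulAction.mem_orbit_iff.1 hab
      exact gen_top_eq_of_smul g b
    let F : Q → TransferSystem G L := Quotient.lift (fun x => gen (G := G) x ⊤) hF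
    have htop : ∀ x : L, Quotient.mk (MulAction.orbitRel G L) x = t ↔ x = ⊤ := by
      intro x
      constructor
      · intro h
        obtain ⟨g, hg⟩ := MulAction.mem_orbit_iff.1 (Quotient.exact h)
        rw [← hg, smul_top']
      · rintro rfl; rfl
    have hΦprop : ∀ c : Q, c ≠ t → CoSatSupIrred (F c) := by
      intro c hc
      obtain ⟨x, rfl⟩ := Quotient.exists_rep c
      exact coSatSupIrred_gen fun h => hc ((htop x).2 h)
    let Φ : {c : Q // c ≠ t} → {T : TransferSystem G L // CoSatSupIrred T} :=
      fun c => ⟨F c.1, hΦprop c.1 c.2⟩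
    have hbij : Function.Bijective Φ := by
      constructor
      · rintro ⟨c, hc⟩ ⟨c', hc'⟩ h
        obtain ⟨x, rfl⟩ := Quotient.exists_rep c
        obtain ⟨y, rfl⟩ := Quotient.exists_rep c'
        have hxy : gen (G := G) x ⊤ = gen (G := G) y ⊤ := congrArg Subtype.val h
        have hx : x ≠ ⊤ := fun hh => hc ((htop x).2 hh)
        have hy : y ≠ ⊤ := fun hh => hc' ((htop y).2 hh)
        obtain ⟨g, hg⟩ := gen_top_inj hx hy hxy
        refine Subtype.ext (Quotient.sound ?_)
        exact MulAction.mem_orbit_iff.2 ⟨g⁻¹, by rw [← hg, inv_smul_smul]⟩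
      · rintro ⟨T, hT⟩
        obtain ⟨x, hx, rfl⟩ := eq_gen_of_coSatSupIrred hT
        exact ⟨⟨Quotient.mk (MulAction.orbitRel G L) x, fun h => hx ((htop x).1 h)⟩, rfl⟩
    have h1 := Nat.card_eq_of_bijective Φ hbij
    rw [← h1]
    haveI : Fintype Q := Fintype.ofFinite _
    rw [Nat.card_eq_fintype_card, Nat.card_eq_fintype_card]
    have h2 := Fintype.card_subtype_compl (fun c : Q => c = t)
    rw [Fintype.card_subtype_eq] at h2
    simpa using h2
end
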